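/- Fix a > 0 and H ∈ (0,1). For every τ > 0, the function D(τ) = ∫₀^τ (τ−u) K(u) du admits the representation D(τ) = ( τ^{H+3/2} / Γ(H+5/2) ) · { 1 − ∫₀^{aτ} e^{−v} (1 − v/(aτ))^{H+3/2} dv }. -/

import Mathlib

open MeasureTheory Real Set

/-- The moving-average kernel of the fractional Ornstein–Uhlenbeck process. -/
noncomputable def fouKernel (a H : ℝ) (t : ℝ) : ℝ :=
  (1 / Real.Gamma (H + 1/2)) *
    (t ^ (H - 1/2) - a * ∫ s in (0:ℝ)..t, (t - s) ^ (H - 1/2) * Real.exp (-a * s))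

/-- The skew function `D(τ) = ∫₀^τ (τ-u) K(u) du`. -/
noncomputable def fouD (a H : ℝ) (τ : ℝ) : ℝ :=
  ∫ u in (0:ℝ)..τ, (τ - u) * fouKernel a H u

namespace FouAux

/-- `∫₀^c x^p = c^(p+1)/(p+1)` for `p > -1`. -/
lemma int_rpow {p : ℝ} (hp : -1 < p) (c : ℝ) :
    ∫ x in (0:ℝ)..c, x ^ p = c ^ (p + 1) / (p + 1) := by
  rw [integral_rpow (Or.inl hp), Real.zero_rpow (by linarith)]
  ring

/-- `∫₀^c (c-x)^p = c^(p+1)/(p+1)` for `p > -1`. -/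
lemma int_rpow_rev {p : ℝ} (hp : -1 < p) (c : ℝ) :
    ∫ s in (0:ℝ)..c, (c - s) ^ p = c ^ (p + 1) / (p + 1) := by
  have h := intervalIntegral.integral_comp_sub_left (a := 0) (b := c)
    (fun x : ℝ => x ^ p) c
  simp only [sub_self, sub_zero] at h
  rw [h, int_rpow hp]

/-- second-order beta integral. -/
lemma int_beta {p : ℝ} (hp : -1 < p) {s t : ℝ} (hst : s ≤ t) :
    ∫ u in s..t, (t - u) * (u - s) ^ p
      = (t - s) ^ (p + 2) / ((p + 1) * (p + 2)) := by
  have h1 : (0:ℝ) < p + 1 := by linarith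
  have h2 : (0:ℝ) < p + 2 := by linarith
  have hL0 : 0 ≤ t - s := sub_nonneg.2 hst
  have key : (∫ u in s..t, (t - u) * (u - s) ^ p)
      = ∫ x in (0:ℝ)..(t - s), (t - (x + s)) * ((x + s) - s) ^ p := by
    rw [intervalIntegral.integral_comp_add_right (fun u : ℝ => (t - u) * (u - s) ^ p) s]
    norm_num
  rw [key]
  have hcong : ∀ x ∈ uIcc (0:ℝ) (t - s),
      (t - (x + s)) * ((x + s) - s) ^ p = (t - s) * x ^ p - x ^ (p + 1) := by
    intro x hx
    rw [uIcc_of_le hL0] at hx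
    have hx0 : 0 ≤ x := hx.1
    have hxx : x ^ (p + 1) = x ^ p * x := by
      rcases eq_or_lt_of_le hx0 with h | h
      · simp [← h, Real.zero_rpow h1.ne', Real.zero_rpow]
      · rw [Real.rpow_add_one h.ne']
    have : (x + s) - s = x := by ring
    rw [this, hxx]
    ring
  rw [intervalIntegral.integral_congr hcong]
  have i1 : IntervalIntegrable (fun x : ℝ => (t - s) * x ^ p) volume 0 (t - s) :=
    (intervalIntegral.intervalIntegrable_rpow' hp).const_mul _
  have i2 : IntervalIntegrable (fun x : ℝ => x ^ (p + 1)) volume 0 (t - s) :=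
    intervalIntegral.intervalIntegrable_rpow' (by linarith)
  rw [intervalIntegral.integral_sub i1 i2, intervalIntegral.integral_const_mul,
    int_rpow hp, int_rpow (by linarith : (-1:ℝ) < p + 1),
    show p + 1 + 1 = p + 2 by ring]
  have hL : (t - s) * (t - s) ^ (p + 1) = (t - s) ^ (p + 2) := by
    rcases eq_or_lt_of_le hL0 with h | h
    · rw [← h]; simp [Real.zero_rpow h1.ne', Real.zero_rpow h2.ne']
    · rw [show p + 2 = p + 1 + 1 by ring, Real.rpow_add_one h.ne' (p+1)]; exact (mul_comm (t - s) ((t - s) ^ (p + 1)))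
  rw [← mul_div_assoc, hL]
  rw [div_sub_div _ _ h1.ne' h2.ne', div_eq_div_iff (by positivity) (by positivity)]
  ring

/-- interval integrability of `s ↦ (u-s)^p` on `[0,u]`. -/
lemma ii_rev {p : ℝ} (hp : -1 < p) (u : ℝ) :
    IntervalIntegrable (fun s : ℝ => (u - s) ^ p) volume 0 u := by
  have h := (intervalIntegral.intervalIntegrable_rpow' (a := u) (b := 0) hp).comp_sub_left u
  simpa using h

lemma ii_rev_exp {p : ℝ} (hp : -1 < p) (a u : ℝ) :
    IntervalIntegrable (fun s : ℝ => (u - s) ^ p * Real.exp (-a * s)) volume 0 u :=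
  (ii_rev hp u).mul_continuousOn
    (Continuous.continuousOn (by continuity))

/-- rewrite the inner integral as `exp(-a u) * primitive`. -/
lemma B_eq {p : ℝ} (a u : ℝ) :
    (∫ s in (0:ℝ)..u, (u - s) ^ p * Real.exp (-a * s))
      = Real.exp (-a * u) * ∫ w in (0:ℝ)..u, w ^ p * Real.exp (a * w) := by
  have h := intervalIntegral.integral_comp_sub_left (a := 0) (b := u)
    (fun w : ℝ => w ^ p * Real.exp (-a * (u - w))) u
  simp only [sub_self, sub_zero] at h
  have h2 : ∀ s : ℝ, (u - s) ^ p * Real.exp (-a * (u - (u - s)))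
      = (u - s) ^ p * Real.exp (-a * s) := by
    intro s; congr 1; congr 1; ring
  calc (∫ s in (0:ℝ)..u, (u - s) ^ p * Real.exp (-a * s))
      = ∫ s in (0:ℝ)..u, (u - s) ^ p * Real.exp (-a * (u - (u - s))) := by
        simp only [h2]
    _ = ∫ w in (0:ℝ)..u, w ^ p * Real.exp (-a * (u - w)) := h
    _ = ∫ w in (0:ℝ)..u, Real.exp (-a * u) * (w ^ p * Real.exp (a * w)) := by
        apply intervalIntegral.integral_congr
        intro w _
        dsimp only
        rw [show -a * (u - w) = -a * u + a * w by ring, Real.exp_add]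
        ring
    _ = Real.exp (-a * u) * ∫ w in (0:ℝ)..u, w ^ p * Real.exp (a * w) :=
        intervalIntegral.integral_const_mul _ _

lemma B_cont {p : ℝ} (hp : -1 < p) (a : ℝ) :
    Continuous (fun u : ℝ => ∫ s in (0:ℝ)..u, (u - s) ^ p * Real.exp (-a * s)) := by
  have : (fun u : ℝ => ∫ s in (0:ℝ)..u, (u - s) ^ p * Real.exp (-a * s))
      = fun u : ℝ => Real.exp (-a * u) * ∫ w in (0:ℝ)..u, w ^ p * Real.exp (a * w) := by
    funext u; exact B_eq a u
  rw [this]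
  have hint : ∀ c d : ℝ, IntervalIntegrable (fun w : ℝ => w ^ p * Real.exp (a * w)) volume c d :=
    fun c d => (intervalIntegral.intervalIntegrable_rpow' hp).mul_continuousOn
      (Continuous.continuousOn (by continuity))
  exact (Real.continuous_exp.comp (by continuity)).mul
    (intervalIntegral.continuous_primitive hint 0)


/-- Fubini on the triangle. -/
lemma swap_tri {p : ℝ} (hp : -1 < p) {a τ : ℝ} (ha : 0 < a) (hτ : 0 < τ) :
    (∫ u in (0:ℝ)..τ, (τ - u) * ∫ s in (0:ℝ)..u, (u - s) ^ p * Real.exp (-a * s))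
      = ∫ s in (0:ℝ)..τ, Real.exp (-a * s) * ∫ u in s..τ, (τ - u) * (u - s) ^ p := by
  have h1 : (0:ℝ) < p + 1 := by linarith
  set μ := volume.restrict (Ioc (0:ℝ) τ) with hμ
  have hfin : IsFiniteMeasure μ :=
    ⟨by rw [hμ, Measure.restrict_apply_univ]; exact measure_Ioc_lt_top⟩
  set f : ℝ → ℝ → ℝ := fun u s =>
    if s < u then (τ - u) * ((u - s) ^ p * Real.exp (-a * s)) else 0 with hfdef
  have hmeas : AEStronglyMeasurable (Function.uncurry f) (μ.prod μ) := by
    have heq : Function.uncurry f = fun z : ℝ × ℝ =>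
        if z.2 < z.1 then (τ - z.1) * ((z.1 - z.2) ^ p * Real.exp (-a * z.2)) else 0 := rfl
    rw [heq]
    apply Measurable.aestronglyMeasurable
    apply Measurable.ite (measurableSet_lt measurable_snd measurable_fst) _ measurable_const
    fun_prop
  have hslice : ∀ u s : ℝ, f u s
      = (Iio u).indicator (fun s' => (τ - u) * ((u - s') ^ p * Real.exp (-a * s'))) s := by
    intro u s
    simp only [hfdef, Set.indicator_apply, mem_Iio]
  have hii : ∀ u : ℝ, IntervalIntegrable
      (fun s => (τ - u) * ((u - s) ^ p * Real.exp (-a * s))) volume 0 u :=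
    fun u => (ii_rev_exp hp a u).const_mul _
  have hinter : ∀ u ∈ Ioc (0:ℝ) τ, Iio u ∩ Ioc (0:ℝ) τ = Ioo 0 u := by
    intro u hu
    ext s
    simp only [mem_inter_iff, mem_Ioc, mem_Iio, mem_Ioo]
    exact ⟨fun h => ⟨h.2.1, h.1⟩, fun h => ⟨h.2, h.1, le_trans h.2.le hu.2⟩⟩
  have hval : ∀ u ∈ Ioc (0:ℝ) τ,
      (∫ s, f u s ∂μ) = ∫ s in (0:ℝ)..u, (τ - u) * ((u - s) ^ p * Real.exp (-a * s)) := by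
    intro u hu
    simp only [hslice]
    rw [hμ, integral_indicator measurableSet_Iio,
      Measure.restrict_restrict measurableSet_Iio, hinter u hu,
      ← integral_Ioc_eq_integral_Ioo, ← intervalIntegral.integral_of_le hu.1.le]
  have hsliceInt : ∀ u ∈ Ioc (0:ℝ) τ, Integrable (fun s => f u s) μ := by
    intro u hu
    have hio : IntegrableOn
        (fun s' => (τ - u) * ((u - s') ^ p * Real.exp (-a * s'))) (Iio u) μ := by
      rw [IntegrableOn, hμ, Measure.restrict_restrict measurableSet_Iio, hinter u hu]
      exact (hii u).1.mono_set Ioo_subset_Ioc_self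
    exact ((integrable_indicator_iff measurableSet_Iio).2 hio).congr
      (Filter.Eventually.of_forall fun s => (hslice u s).symm)
  set C : ℝ := τ * (τ ^ (p + 1) / (p + 1)) with hC
  have hbound : ∀ u ∈ Ioc (0:ℝ) τ, (∫ s, ‖f u s‖ ∂μ) ≤ C := by
    intro u hu
    have : (∫ s, ‖f u s‖ ∂μ)
        = ∫ s in (0:ℝ)..u, ‖(τ - u) * ((u - s) ^ p * Real.exp (-a * s))‖ := by
      simp only [hslice, norm_indicator_eq_indicator_norm]
      rw [hμ, integral_indicator measurableSet_Iio,
        Measure.restrict_restrict measurableSet_Iio, hinter u hu,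
        ← integral_Ioc_eq_integral_Ioo, ← intervalIntegral.integral_of_le hu.1.le]
    rw [this]
    have hb : (∫ s in (0:ℝ)..u, ‖(τ - u) * ((u - s) ^ p * Real.exp (-a * s))‖)
        ≤ ∫ s in (0:ℝ)..u, τ * (u - s) ^ p := by
      apply intervalIntegral.integral_mono_on hu.1.le (hii u).norm
        ((ii_rev hp u).const_mul τ)
      intro s hs
      have hus : (0:ℝ) ≤ u - s := sub_nonneg.2 hs.2
      have h2 : (0:ℝ) ≤ (u - s) ^ p := Real.rpow_nonneg hus p
      have h3 : Real.exp (-a * s) ≤ 1 := by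
        rw [Real.exp_le_one_iff]
        nlinarith [hs.1, ha.le]
      rw [Real.norm_eq_abs, abs_of_nonneg (mul_nonneg (sub_nonneg.2 hu.2)
        (mul_nonneg h2 (Real.exp_nonneg _)))]
      calc (τ - u) * ((u - s) ^ p * Real.exp (-a * s))
          ≤ τ * ((u - s) ^ p * 1) := by
            apply mul_le_mul (by linarith [hu.1]) (mul_le_mul_of_nonneg_left h3 h2)
              (mul_nonneg h2 (Real.exp_nonneg _)) hτ.le
        _ = τ * (u - s) ^ p := by ring
    refine hb.trans ?_
    rw [intervalIntegral.integral_const_mul, int_rpow_rev hp]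
    rw [hC]
    have hle : u ^ (p + 1) ≤ τ ^ (p + 1) := Real.rpow_le_rpow hu.1.le hu.2 h1.le
    exact mul_le_mul_of_nonneg_left ((div_le_div_iff_of_pos_right h1).2 hle) hτ.le
  have hIntf : Integrable (Function.uncurry f) (μ.prod μ) := by
    rw [integrable_prod_iff hmeas]
    constructor
    · exact (ae_restrict_iff' measurableSet_Ioc).2
        (Filter.Eventually.of_forall hsliceInt)
    · apply Integrable.mono' (integrable_const C) hmeas.norm.integral_prod_right'
      refine (ae_restrict_iff' measurableSet_Ioc).2
        (Filter.Eventually.of_forall fun u hu => ?_)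
      rw [Real.norm_eq_abs, abs_of_nonneg (integral_nonneg fun s => norm_nonneg _)]
      exact hbound u hu
  have hL : (∫ u in (0:ℝ)..τ, (τ - u) * ∫ s in (0:ℝ)..u, (u - s) ^ p * Real.exp (-a * s))
      = ∫ u, (∫ s, f u s ∂μ) ∂μ := by
    rw [intervalIntegral.integral_of_le hτ.le]
    refine (setIntegral_congr_fun measurableSet_Ioc fun u hu => ?_)
    rw [hval u hu, intervalIntegral.integral_const_mul]
  rw [hL, MeasureTheory.integral_integral_swap hIntf]
  rw [intervalIntegral.integral_of_le hτ.le]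
  refine (setIntegral_congr_fun measurableSet_Ioc fun s hs => ?_).symm
  have hslice2 : ∀ u : ℝ, f u s
      = (Ioi s).indicator (fun u' => (τ - u') * ((u' - s) ^ p * Real.exp (-a * s))) u := by
    intro u
    simp only [hfdef, Set.indicator_apply, mem_Ioi]
  have hinter2 : Ioi s ∩ Ioc (0:ℝ) τ = Ioc s τ := by
    ext u
    simp only [mem_inter_iff, mem_Ioc, mem_Ioi]
    exact ⟨fun h => ⟨h.1, h.2.2⟩, fun h => ⟨h.1, lt_trans hs.1 h.1, h.2⟩⟩
  have : (∫ u, f u s ∂μ) = ∫ u in s..τ, (τ - u) * ((u - s) ^ p * Real.exp (-a * s)) := by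
    simp only [hslice2]
    rw [hμ, integral_indicator measurableSet_Ioi,
      Measure.restrict_restrict measurableSet_Ioi, hinter2,
      ← intervalIntegral.integral_of_le hs.2]
  rw [this]
  have hcomm : ∀ u : ℝ, (τ - u) * ((u - s) ^ p * Real.exp (-a * s))
      = Real.exp (-a * s) * ((τ - u) * (u - s) ^ p) := fun u => by ring
  simp only [hcomm]
  rw [intervalIntegral.integral_const_mul]

end FouAux

theorem fouD_representation (a H : ℝ) (ha : 0 < a) (hH : H ∈ Set.Ioo (0:ℝ) 1)
    (τ : ℝ) (hτ : 0 < τ) :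
    fouD a H τ = (τ ^ (H + 3/2) / Real.Gamma (H + 5/2)) *
      (1 - ∫ v in (0:ℝ)..(a * τ), Real.exp (-v) * (1 - v / (a * τ)) ^ (H + 3/2)) := by
  obtain ⟨hH0, hH1⟩ := hH
  set p : ℝ := H - 1/2 with hpdef
  have hp : -1 < p := by rw [hpdef]; linarith
  have h1 : (0:ℝ) < p + 1 := by rw [hpdef]; linarith
  have h2 : (0:ℝ) < p + 2 := by rw [hpdef]; linarith
  have hp2 : p + 2 = H + 3/2 := by rw [hpdef]; ring
  have hΓp : 0 < Real.Gamma (H + 1/2) := Real.Gamma_pos_of_pos (by linarith)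
  have hΓ5 : Real.Gamma (H + 5/2) = (H + 3/2) * ((H + 1/2) * Real.Gamma (H + 1/2)) := by
    rw [show H + 5/2 = (H + 3/2) + 1 by ring,
      Real.Gamma_add_one (by positivity : H + 3/2 ≠ 0),
      show H + 3/2 = (H + 1/2) + 1 by ring,
      Real.Gamma_add_one (by positivity : H + 1/2 ≠ 0)]
  set J : ℝ := ∫ s in (0:ℝ)..τ, Real.exp (-a * s) * (τ - s) ^ (H + 3/2) with hJ
  -- LHS computation
  have e1 : fouD a H τ = (1 / Real.Gamma (H + 1/2)) *
      ∫ u in (0:ℝ)..τ, ((τ - u) * u ^ p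
        - a * ((τ - u) * ∫ s in (0:ℝ)..u, (u - s) ^ p * Real.exp (-a * s))) := by
    rw [fouD, ← intervalIntegral.integral_const_mul]
    refine intervalIntegral.integral_congr fun u _ => ?_
    simp only [fouKernel]
    rw [← hpdef]
    ring
  have i1 : IntervalIntegrable (fun u : ℝ => (τ - u) * u ^ p) volume 0 τ :=
    (intervalIntegral.intervalIntegrable_rpow' hp).continuousOn_mul
      (Continuous.continuousOn (by continuity))
  have i2 : IntervalIntegrable (fun u : ℝ =>
      a * ((τ - u) * ∫ s in (0:ℝ)..u, (u - s) ^ p * Real.exp (-a * s))) volume 0 τ :=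
    (continuous_const.mul
      ((continuous_const.sub continuous_id).mul (FouAux.B_cont hp a))).intervalIntegrable 0 τ
  have hbeta0 : (∫ u in (0:ℝ)..τ, (τ - u) * u ^ p) = τ ^ (p + 2) / ((p + 1) * (p + 2)) := by
    have h := FouAux.int_beta hp (le_of_lt hτ) (s := 0) (t := τ)
    simpa using h
  have hswap : (∫ u in (0:ℝ)..τ, (τ - u) * ∫ s in (0:ℝ)..u, (u - s) ^ p * Real.exp (-a * s))
      = (1/((p+1)*(p+2))) * ∫ s in (0:ℝ)..τ, Real.exp (-a * s) * (τ - s) ^ (p + 2) := by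
    rw [FouAux.swap_tri hp ha hτ, ← intervalIntegral.integral_const_mul]
    refine intervalIntegral.integral_congr fun s hs => ?_
    rw [uIcc_of_le hτ.le] at hs
    rw [FouAux.int_beta hp hs.2]
    ring
  have hLHS : fouD a H τ = (1 / Real.Gamma (H + 1/2)) *
      (τ ^ (p + 2) / ((p + 1) * (p + 2))
        - a * ((1/((p+1)*(p+2))) * ∫ s in (0:ℝ)..τ, Real.exp (-a * s) * (τ - s) ^ (p + 2))) := by
    rw [e1, intervalIntegral.integral_sub i1 i2, hbeta0,
      intervalIntegral.integral_const_mul, hswap]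
  -- RHS integral computation
  have hE : (∫ v in (0:ℝ)..(a * τ), Real.exp (-v) * (1 - v / (a * τ)) ^ (H + 3/2))
      = a * ((τ ^ (H + 3/2))⁻¹ * J) := by
    have h := intervalIntegral.smul_integral_comp_mul_left
      (a := 0) (b := τ) (fun v : ℝ => Real.exp (-v) * (1 - v / (a * τ)) ^ (H + 3/2)) a
    simp only [mul_zero, smul_eq_mul] at h
    rw [← h]
    congr 1
    rw [hJ, ← intervalIntegral.integral_const_mul]
    refine intervalIntegral.integral_congr fun s hs => ?_
    rw [uIcc_of_le hτ.le] at hs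
    rw [mul_div_mul_left s τ ha.ne',
      show (1 : ℝ) - s / τ = (τ - s) / τ by field_simp,
      Real.div_rpow (sub_nonneg.2 hs.2) hτ.le, neg_mul]
    ring
  rw [hLHS, hE, hΓ5, hp2, ← hJ]
  rw [hp2] at h2
  have hτq : (0:ℝ) < τ ^ (H + 3/2) := Real.rpow_pos_of_pos hτ _
  rw [show p + 1 = H + 1/2 by rw [hpdef]; ring]
  field_simp
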